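/- Let H be a quasi-Hopf algebra and t ∈ H a left integral. Then for all h ∈ H, ∑ h X¹t₁ ⊗ S(X²t₂)α X³ = ∑ X¹t₁ ⊗ S(X²t₂)α X³ h, where Φ = ∑ X¹⊗X²⊗X³. -/

import Mathlib

set_option autoImplicit false

open TensorProduct

/-- A quasi-bialgebra in the sense of Drinfeld. The reassociator `Phi` lives in
`H ⊗ (H ⊗ H)`, and `(Δ ⊗ id)` is transported along the associator. -/
structure QuasiBialgebra (k H : Type*) [Field k] [Ring H] [Algebra k H] where
  comul : H →ₐ[k] H ⊗[k] H
  counit : H →ₐ[k] k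
  Phi : H ⊗[k] (H ⊗[k] H)
  PhiInv : H ⊗[k] (H ⊗[k] H)
  Phi_invertible : Phi * PhiInv = 1
  invertible_Phi : PhiInv * Phi = 1
  quasi_coassoc : ∀ h : H,
    (Algebra.TensorProduct.map (AlgHom.id k H) comul) (comul h) * Phi
      = Phi * (Algebra.TensorProduct.assoc k k k H H H)
          ((Algebra.TensorProduct.map comul (AlgHom.id k H)) (comul h))
  counit_right : ∀ h : H,
    (Algebra.TensorProduct.map (AlgHom.id k H) counit) (comul h) = h ⊗ₜ[k] 1
  counit_left : ∀ h : H,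
    (Algebra.TensorProduct.map counit (AlgHom.id k H)) (comul h) = 1 ⊗ₜ[k] h
  pentagon :
    (1 ⊗ₜ[k] Phi)
      * (Algebra.TensorProduct.map (AlgHom.id k H)
          ((Algebra.TensorProduct.assoc k k k H H H).toAlgHom.comp
            (Algebra.TensorProduct.map comul (AlgHom.id k H)))) Phi
      * (Algebra.TensorProduct.map (AlgHom.id k H)
            (Algebra.TensorProduct.assoc k k k H H H).toAlgHom)
          ((Algebra.TensorProduct.assoc k k k H (H ⊗[k] H) H) (Phi ⊗ₜ[k] 1))
    = (Algebra.TensorProduct.map (AlgHom.id k H)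
        (Algebra.TensorProduct.map (AlgHom.id k H) comul)) Phi
      * (Algebra.TensorProduct.assoc k k k H H (H ⊗[k] H))
          ((Algebra.TensorProduct.map comul (AlgHom.id k (H ⊗[k] H))) Phi)
  counit_mid_Phi :
    (Algebra.TensorProduct.map (AlgHom.id k H)
      (Algebra.TensorProduct.map counit (AlgHom.id k H))) Phi = 1

/-- A quasi-Hopf algebra: a quasi-bialgebra with an algebra anti-homomorphism `S`
and elements `alpha`, `beta` satisfying Drinfeld's antipode axioms.  Bijectivity
of `S` is *not* assumed. -/
structure QuasiHopfAlgebra (k H : Type*) [Field k] [Ring H] [Algebra k H] extends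
    QuasiBialgebra k H where
  S : H →ₗ[k] H
  alpha : H
  beta : H
  S_one : S 1 = 1
  S_mul : ∀ a b : H, S (a * b) = S b * S a
  antipode_left : ∀ h : H,
    (LinearMap.mul' k H)
      ((TensorProduct.map ((LinearMap.mulRight k alpha) ∘ₗ S) LinearMap.id) (comul h))
      = counit h • alpha
  antipode_right : ∀ h : H,
    (LinearMap.mul' k H)
      ((TensorProduct.map LinearMap.id ((LinearMap.mulLeft k beta) ∘ₗ S)) (comul h))
      = counit h • beta
  antipode_Phi :
    (LinearMap.mul' k H)
      ((TensorProduct.map LinearMap.id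
        ((LinearMap.mul' k H) ∘ₗ (TensorProduct.map
          ((LinearMap.mulRight k alpha) ∘ₗ ((LinearMap.mulLeft k beta) ∘ₗ S))
          LinearMap.id))) Phi) = 1
  antipode_PhiInv :
    (LinearMap.mul' k H)
      ((TensorProduct.map ((LinearMap.mulRight k alpha) ∘ₗ S)
        ((LinearMap.mul' k H) ∘ₗ (TensorProduct.map (LinearMap.mulRight k beta) S)))
        PhiInv) = 1

namespace QuasiHopfAlgebra

variable {k H : Type*} [Field k] [Ring H] [Algebra k H] (Q : QuasiHopfAlgebra k H)

/-- The space of left integrals in `H`. -/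
def leftIntegrals : Submodule k H where
  carrier := {t | ∀ h : H, h * t = Q.counit h • t}
  add_mem' := by intro a b ha hb h; rw [mul_add, ha h, hb h, smul_add]
  zero_mem' := by intro h; simp
  smul_mem' := by intro c x hx h; rw [mul_smul_comm, hx h, smul_comm]

/-- The space of right integrals in `H`. -/
def rightIntegrals : Submodule k H where
  carrier := {t | ∀ h : H, t * h = Q.counit h • t}
  add_mem' := by intro a b ha hb h; rw [add_mul, ha h, hb h, smul_add]
  zero_mem' := by intro h; simp
  smul_mem' := by intro c x hx h; rw [smul_mul_assoc, hx h, smul_comm]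

/-- The element `p_R = ∑ x¹ ⊗ x² β S(x³)`. -/
noncomputable def pR : H ⊗[k] H :=
  (TensorProduct.map LinearMap.id
    ((LinearMap.mul' k H) ∘ₗ (TensorProduct.map (LinearMap.mulRight k Q.beta) Q.S)))
    Q.PhiInv

/-- The element `∑ X¹ t₁ ⊗ S(X² t₂) α X³` built from a (left integral) `t`. -/
noncomputable def Tel (t : H) : H ⊗[k] H :=
  (TensorProduct.map LinearMap.id
    ((LinearMap.mul' k H) ∘ₗ
      (TensorProduct.map ((LinearMap.mulRight k Q.alpha) ∘ₗ Q.S) LinearMap.id)))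
    (Q.Phi * (Algebra.TensorProduct.assoc k k k H H H) (Q.comul t ⊗ₜ[k] 1))

end QuasiHopfAlgebra

section Aux

variable {k H : Type*} [Field k] [Ring H] [Algebra k H] (Q : QuasiHopfAlgebra k H)

/-- The linear map `a ⊗ b ↦ S(a) α b`. -/
noncomputable def qf : H ⊗[k] H →ₗ[k] H :=
  (LinearMap.mul' k H) ∘ₗ
    (TensorProduct.map ((LinearMap.mulRight k Q.alpha) ∘ₗ Q.S) LinearMap.id)

lemma qf_tmul (b c : H) : qf Q (b ⊗ₜ[k] c) = Q.S b * Q.alpha * c := by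
  simp [qf]

/-- `id ⊗ qf`. -/
noncomputable def Fq : H ⊗[k] (H ⊗[k] H) →ₗ[k] H ⊗[k] H :=
  TensorProduct.map LinearMap.id (qf Q)

lemma Tel_eq (t : H) :
    Q.Tel t = Fq Q (Q.Phi * (Algebra.TensorProduct.assoc k k k H H H) (Q.comul t ⊗ₜ[k] 1)) :=
  rfl

lemma qf_antipode (g : H) : qf Q (Q.comul g) = Q.counit g • Q.alpha :=
  Q.antipode_left g

lemma qf_mul_right (w : H ⊗[k] H) (b c : H) :
    qf Q (w * (b ⊗ₜ[k] c)) = Q.S b * qf Q w * c := by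
  induction w using TensorProduct.induction_on with
  | zero => simp
  | add y z hy hz => rw [add_mul, map_add, hy, hz, map_add, mul_add, add_mul]
  | tmul u v =>
    simp [Algebra.TensorProduct.tmul_mul_tmul, qf_tmul, Q.S_mul, mul_assoc]

/-- Key lemma 1: `qf (Δ g * x) = ε g • qf x`. -/
lemma qf_comul_mul (g : H) (x : H ⊗[k] H) :
    qf Q (Q.comul g * x) = Q.counit g • qf Q x := by
  induction x using TensorProduct.induction_on with
  | zero => simp
  | add y z hy hz => rw [mul_add, map_add, hy, hz, map_add, smul_add]
  | tmul b c =>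
    rw [qf_mul_right, qf_antipode, qf_tmul]
    rw [mul_smul_comm, smul_mul_assoc]

lemma counit_right' (h : H) :
    (TensorProduct.map (LinearMap.id (R := k) (M := H)) Q.counit.toLinearMap)
      (Q.comul h) = h ⊗ₜ[k] (1 : k) := by
  have e : ∀ x : H ⊗[k] H,
      (TensorProduct.map (LinearMap.id (R := k) (M := H)) Q.counit.toLinearMap) x
        = (Algebra.TensorProduct.map (AlgHom.id k H) Q.counit) x := by
    intro x
    induction x using TensorProduct.induction_on with
    | zero => simp
    | add y z hy hz => rw [map_add, map_add, hy, hz]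
    | tmul u v => simp
  rw [e, Q.counit_right h]

lemma counit_left' (h : H) :
    (TensorProduct.map Q.counit.toLinearMap (LinearMap.id (R := k) (M := H)))
      (Q.comul h) = (1 : k) ⊗ₜ[k] h := by
  have e : ∀ x : H ⊗[k] H,
      (TensorProduct.map Q.counit.toLinearMap (LinearMap.id (R := k) (M := H))) x
        = (Algebra.TensorProduct.map Q.counit (AlgHom.id k H)) x := by
    intro x
    induction x using TensorProduct.induction_on with
    | zero => simp
    | add y z hy hz => rw [map_add, map_add, hy, hz]
    | tmul u v => simp
  rw [e, Q.counit_left h]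

/-- Key lemma 2: `Fq ((id ⊗ Δ)(Δ h) * x) = Fq ((h ⊗ 1 ⊗ 1) * x)`. -/
lemma Fq_key (h : H) (x : H ⊗[k] (H ⊗[k] H)) :
    Fq Q ((Algebra.TensorProduct.map (AlgHom.id k H) Q.comul) (Q.comul h) * x)
      = Fq Q ((h ⊗ₜ[k] ((1 : H) ⊗ₜ[k] (1 : H))) * x) := by
  induction x using TensorProduct.induction_on with
  | zero => simp
  | add y z hy hz => rw [mul_add, mul_add, map_add, map_add, hy, hz]
  | tmul a y =>
    have key : ∀ w : H ⊗[k] H,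
        Fq Q ((Algebra.TensorProduct.map (AlgHom.id k H) Q.comul) w * (a ⊗ₜ[k] y))
          = (TensorProduct.map (LinearMap.mulRight k a)
              ((Q.counit.toLinearMap).smulRight (qf Q y))) w := by
      intro w
      induction w using TensorProduct.induction_on with
      | zero => simp
      | add y' z' hy hz => rw [map_add, add_mul, map_add, hy, hz, map_add]
      | tmul u v =>
        simp only [Algebra.TensorProduct.map_tmul, AlgHom.coe_id, id_eq,
          Algebra.TensorProduct.tmul_mul_tmul, Fq, TensorProduct.map_tmul,
          LinearMap.id_coe, qf_comul_mul, LinearMap.mulRight_apply,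
          LinearMap.smulRight_apply, AlgHom.toLinearMap_apply]
    rw [key]
    have hsplit : ((Q.counit.toLinearMap).smulRight (qf Q y))
        = (LinearMap.toSpanSingleton k H (qf Q y)) ∘ₗ Q.counit.toLinearMap := by
      ext v; simp
    rw [hsplit]
    have hmaps : (TensorProduct.map (LinearMap.mulRight k a)
          ((LinearMap.toSpanSingleton k H (qf Q y)) ∘ₗ Q.counit.toLinearMap))
        = (TensorProduct.map (LinearMap.mulRight k a)
            (LinearMap.toSpanSingleton k H (qf Q y))) ∘ₗ
          (TensorProduct.map LinearMap.id Q.counit.toLinearMap) := by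
      rw [← TensorProduct.map_comp, LinearMap.comp_id]
    rw [hmaps, LinearMap.comp_apply, counit_right']
    simp [Fq, Algebra.TensorProduct.tmul_mul_tmul, ← Algebra.TensorProduct.one_def,
      one_mul]

/-- Step A: for a left integral `t`, `Δ t ⊗ h = (Δ ⊗ id)(Δ h) * (Δ t ⊗ 1)`. -/
lemma stepA (t : H) (ht : t ∈ Q.leftIntegrals) (h : H) :
    (Q.comul t ⊗ₜ[k] h : (H ⊗[k] H) ⊗[k] H)
      = (Algebra.TensorProduct.map Q.comul (AlgHom.id k H)) (Q.comul h)
          * (Q.comul t ⊗ₜ[k] 1) := by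
  have ht' : ∀ u : H, u * t = Q.counit u • t := ht
  have key : ∀ w : H ⊗[k] H,
      (Algebra.TensorProduct.map Q.comul (AlgHom.id k H)) w * (Q.comul t ⊗ₜ[k] 1)
        = (TensorProduct.map ((Q.counit.toLinearMap).smulRight (Q.comul t))
            LinearMap.id) w := by
    intro w
    induction w using TensorProduct.induction_on with
    | zero => simp
    | add y z hy hz => rw [map_add, add_mul, hy, hz, map_add]
    | tmul u v =>
      simp only [Algebra.TensorProduct.map_tmul, AlgHom.coe_id, id_eq,
        Algebra.TensorProduct.tmul_mul_tmul, mul_one, TensorProduct.map_tmul,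
        LinearMap.smulRight_apply, LinearMap.id_coe, AlgHom.toLinearMap_apply]
      rw [← map_mul, ht' u, map_smul]
  rw [key]
  have hsplit : ((Q.counit.toLinearMap).smulRight (Q.comul t))
      = (LinearMap.toSpanSingleton k (H ⊗[k] H) (Q.comul t)) ∘ₗ Q.counit.toLinearMap := by
    ext v; simp
  rw [hsplit]
  have hmaps : (TensorProduct.map
        ((LinearMap.toSpanSingleton k (H ⊗[k] H) (Q.comul t)) ∘ₗ Q.counit.toLinearMap)
        (LinearMap.id (R := k) (M := H)))
      = (TensorProduct.map (LinearMap.toSpanSingleton k (H ⊗[k] H) (Q.comul t))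
          LinearMap.id) ∘ₗ
        (TensorProduct.map Q.counit.toLinearMap LinearMap.id) := by
    rw [← TensorProduct.map_comp, LinearMap.comp_id]
  rw [hmaps, LinearMap.comp_apply, counit_left']
  simp

lemma Fq_left (h : H) (x : H ⊗[k] (H ⊗[k] H)) :
    Fq Q ((h ⊗ₜ[k] ((1 : H) ⊗ₜ[k] (1 : H))) * x)
      = (TensorProduct.map (LinearMap.mulLeft k h) LinearMap.id) (Fq Q x) := by
  induction x using TensorProduct.induction_on with
  | zero => simp
  | add y z hy hz => rw [mul_add, map_add, hy, hz, map_add, map_add]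
  | tmul a y =>
    simp [Fq, Algebra.TensorProduct.tmul_mul_tmul, ← Algebra.TensorProduct.one_def,
      one_mul]

lemma qf_one_mul_right (y : H ⊗[k] H) (h : H) :
    qf Q (y * ((1 : H) ⊗ₜ[k] h)) = qf Q y * h := by
  induction y using TensorProduct.induction_on with
  | zero => simp
  | add a b ha hb => rw [add_mul, map_add, ha, hb, map_add, add_mul]
  | tmul b c =>
    simp [Algebra.TensorProduct.tmul_mul_tmul, qf_tmul, mul_assoc]

lemma Fq_right (h : H) (x : H ⊗[k] (H ⊗[k] H)) :
    Fq Q (x * ((1 : H) ⊗ₜ[k] ((1 : H) ⊗ₜ[k] h)))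
      = (TensorProduct.map LinearMap.id (LinearMap.mulRight k h)) (Fq Q x) := by
  induction x using TensorProduct.induction_on with
  | zero => simp
  | add y z hy hz => rw [add_mul, map_add, hy, hz, map_add, map_add]
  | tmul a y =>
    simp [Fq, Algebra.TensorProduct.tmul_mul_tmul, qf_one_mul_right]

end Aux

/-- for a left integral `t`,
`∑ h X¹t₁ ⊗ S(X²t₂)α X³ = ∑ X¹t₁ ⊗ S(X²t₂)α X³ h`. -/
theorem left_integral_tensor_identity {k H : Type*} [Field k] [Ring H] [Algebra k H]
    (Q : QuasiHopfAlgebra k H) (t : H) (ht : t ∈ Q.leftIntegrals) (h : H) :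
    (TensorProduct.map (LinearMap.mulLeft k h) LinearMap.id) (Q.Tel t)
      = (TensorProduct.map LinearMap.id (LinearMap.mulRight k h)) (Q.Tel t) := by
  have harg : (Q.Phi * (Algebra.TensorProduct.assoc k k k H H H) (Q.comul t ⊗ₜ[k] 1))
        * ((1 : H) ⊗ₜ[k] ((1 : H) ⊗ₜ[k] h))
      = (Algebra.TensorProduct.map (AlgHom.id k H) Q.comul) (Q.comul h)
        * (Q.Phi * (Algebra.TensorProduct.assoc k k k H H H) (Q.comul t ⊗ₜ[k] 1)) := by
    rw [mul_assoc]
    have e0 : ((1 : H) ⊗ₜ[k] ((1 : H) ⊗ₜ[k] h))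
        = (Algebra.TensorProduct.assoc k k k H H H)
            ((((1 : H) ⊗ₜ[k] (1 : H)) : H ⊗[k] H) ⊗ₜ[k] h) := by
      simp
    have e1 : (Algebra.TensorProduct.assoc k k k H H H) (Q.comul t ⊗ₜ[k] (1 : H))
          * ((1 : H) ⊗ₜ[k] ((1 : H) ⊗ₜ[k] h))
        = (Algebra.TensorProduct.assoc k k k H H H) (Q.comul t ⊗ₜ[k] h) := by
      rw [e0, ← map_mul]
      congr 1
      rw [Algebra.TensorProduct.tmul_mul_tmul, ← Algebra.TensorProduct.one_def,
        mul_one, one_mul]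
    rw [e1, stepA Q t ht h, map_mul, ← mul_assoc, ← Q.quasi_coassoc h, mul_assoc]
  rw [Tel_eq, ← Fq_left, ← Fq_right, harg, Fq_key]
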